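/- In the Grassmann graph J_q(n,k) with n > 2k, if x, y are vertices at distance i with 1 < i < k and z is a neighbor of x with ∂(z,y) = i + 1, then dim(z ∩ x ∩ y) = k - i - 1 and dim(z ∩ (x + y)) = k - 1. -/

import Mathlib

/-- The Grassmann graph: vertices are the `k`-dimensional subspaces of `V`;
two vertices are adjacent when their intersection has dimension `k - 1`. -/
def grassmannGraph (F V : Type*) [Field F] [AddCommGroup V] [Module F V] (k : ℕ) :
    SimpleGraph {W : Submodule F V // Module.finrank F W = k} where
  Adj x y := x ≠ y ∧ Module.finrank F (x.1 ⊓ y.1 : Submodule F V) = k - 1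
  symm := by
    constructor
    intro x y h
    exact ⟨h.1.symm, by rw [inf_comm]; exact h.2⟩
  loopless := by
    constructor
    intro x h
    exact h.1 rfl

open Module Submodule

section Aux

variable {F V : Type*} [Field F] [AddCommGroup V] [Module F V] [FiniteDimensional F V]

lemma gg_sup_span (N : Submodule F V) (v : V) (hv : v ∉ N) :
    finrank F ↥(N ⊔ F ∙ v) = finrank F N + 1 := by
  have h0 : v ≠ 0 := fun h => hv (h ▸ N.zero_mem)
  have hspan : finrank F ↥(F ∙ v) = 1 := finrank_span_singleton h0
  have hinf : N ⊓ (F ∙ v) = ⊥ := by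
    rw [eq_bot_iff]
    rintro w ⟨hwN, hws⟩
    obtain ⟨r, rfl⟩ := mem_span_singleton.mp hws
    rcases eq_or_ne r 0 with rfl | hr
    · simp
    · exact absurd (by simpa [smul_smul, inv_mul_cancel₀ hr] using N.smul_mem r⁻¹ hwN : v ∈ N) hv
  have := Submodule.finrank_sup_add_finrank_inf_eq N (F ∙ v)
  rw [hinf, hspan] at this
  simpa using this

/-- Existence of an intermediate submodule of any prescribed dimension. -/
lemma gg_intermediate (d : ℕ) : ∀ N P : Submodule F V, N ≤ P →
    finrank F N + d ≤ finrank F P →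
    ∃ H : Submodule F V, N ≤ H ∧ H ≤ P ∧ finrank F H = finrank F N + d := by
  induction d with
  | zero => exact fun N P h _ => ⟨N, le_rfl, h, by simp⟩
  | succ d ih =>
    intro N P hNP hle
    have hne : N ≠ P := by
      intro h; subst h; omega
    have hlt : N < P := lt_of_le_of_ne hNP hne
    obtain ⟨v, hvP, hvN⟩ := SetLike.exists_of_lt hlt
    have hNv : N ⊔ (F ∙ v) ≤ P := sup_le hNP ((span_singleton_le_iff_mem v P).mpr hvP)
    have hr : finrank F ↥(N ⊔ F ∙ v) = finrank F N + 1 := gg_sup_span N v hvN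
    obtain ⟨H, h1, h2, h3⟩ := ih (N ⊔ F ∙ v) P hNv (by rw [hr]; omega)
    exact ⟨H, le_trans le_sup_left h1, h2, by rw [h3, hr]; omega⟩

/-- Step inequality: crossing one edge changes the intersection dim with `y` by at most 1. -/
lemma gg_step {k : ℕ} (a b y : Submodule F V) (hb : finrank F b = k)
    (hab : finrank F (a ⊓ b : Submodule F V) = k - 1) (hk : 1 ≤ k) (hby : b ⊓ y ≤ b) :
    finrank F (b ⊓ y : Submodule F V) ≤ finrank F (a ⊓ y : Submodule F V) + 1 := by
  set W := b ⊓ y with hW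
  have h1 : W ⊓ (a ⊓ b) = W ⊓ a := by
    apply le_antisymm
    · exact inf_le_inf_left W inf_le_left
    · exact le_inf inf_le_left (le_inf (inf_le_right) (le_trans inf_le_left inf_le_left))
  have h2 : W ⊓ a ≤ a ⊓ y := le_inf inf_le_right (le_trans inf_le_left inf_le_right)
  have h3 := Submodule.finrank_sup_add_finrank_inf_eq W (a ⊓ b)
  have h4 : finrank F ↥(W ⊔ (a ⊓ b)) ≤ k := by
    rw [← hb]
    exact Submodule.finrank_mono (sup_le inf_le_left inf_le_right)
  have h5 : finrank F ↥(W ⊓ a) ≤ finrank F ↥(a ⊓ y) := Submodule.finrank_mono h2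
  rw [h1, hab] at h3
  omega

end Aux

section Graph

variable {F V : Type*} [Field F] [AddCommGroup V] [Module F V] [FiniteDimensional F V] {k : ℕ}

local notation "Vtx" => {W : Submodule F V // Module.finrank F W = k}

lemma gg_walk_lower (hk : 1 ≤ k) :
    ∀ {a b : Vtx} (w : (grassmannGraph F V k).Walk a b),
      k ≤ finrank F (a.1 ⊓ b.1 : Submodule F V) + w.length := by
  intro a b w
  induction w with
  | @nil u =>
    have : (u.1 ⊓ u.1 : Submodule F V) = u.1 := inf_idem _
    rw [SimpleGraph.Walk.length_nil, this, u.2]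
    omega
  | @cons u v b h p ih =>
    have hstep := gg_step (k := k) u.1 v.1 b.1 v.2 h.2 hk inf_le_left
    rw [SimpleGraph.Walk.length_cons]
    omega

lemma gg_walk_build (hk : 1 ≤ k) :
    ∀ (d : ℕ) (x y : Vtx), finrank F (x.1 ⊓ y.1 : Submodule F V) + d = k →
      ∃ w : (grassmannGraph F V k).Walk x y, w.length = d := by
  intro d
  induction d with
  | zero =>
    intro x y hf
    have h1 : (x.1 ⊓ y.1 : Submodule F V) = x.1 :=
      Submodule.eq_of_le_of_finrank_le inf_le_left (by rw [x.2]; omega)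
    have h2 : x.1 ≤ y.1 := h1 ▸ inf_le_right
    have h3 : x.1 = y.1 := Submodule.eq_of_le_of_finrank_le h2 (by rw [x.2, y.2])
    have : x = y := Subtype.ext h3
    subst this
    exact ⟨SimpleGraph.Walk.nil, rfl⟩
  | succ d ih =>
    intro x y hf
    set f := finrank F (x.1 ⊓ y.1 : Submodule F V) with hfdef
    -- y is not contained in x
    have hynx : ¬ (y.1 ≤ x.1) := by
      intro hle
      have : (x.1 ⊓ y.1 : Submodule F V) = y.1 := inf_eq_right.mpr hle
      rw [this, y.2] at hfdef
      omega
    obtain ⟨v, hvy, hvx⟩ := SetLike.not_le_iff_exists.mp hynx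
    -- an intermediate hyperplane of x containing x ⊓ y
    have hfk : f + (k - 1 - f) = k - 1 := by
      have : f ≤ k - 1 := by
        have := Submodule.finrank_mono (inf_le_left : x.1 ⊓ y.1 ≤ x.1)
        rw [x.2] at this
        omega
      omega
    obtain ⟨H, hH1, hH2, hH3⟩ := gg_intermediate (k - 1 - f) (x.1 ⊓ y.1) x.1 inf_le_left
      (by rw [x.2, ← hfdef]; omega)
    rw [← hfdef, hfk] at hH3
    have hvH : v ∉ H := fun h => hvx (hH2 h)
    -- the new vertex Z = H ⊔ span v
    have hZrk : finrank F ↥(H ⊔ F ∙ v) = k := by rw [gg_sup_span H v hvH, hH3]; omega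
    set Z : Submodule F V := H ⊔ F ∙ v with hZdef
    have hvZ : v ∈ Z := (le_sup_right : (F ∙ v) ≤ Z) (Submodule.mem_span_singleton_self v)
    have hZnx : ¬ (Z ≤ x.1) := fun h => hvx (h hvZ)
    let z : {W : Submodule F V // finrank F W = k} := ⟨Z, hZrk⟩
    -- adjacency x ~ z
    have hxZ : finrank F (x.1 ⊓ Z : Submodule F V) = k - 1 := by
      have hle : H ≤ x.1 ⊓ Z := le_inf hH2 le_sup_left
      have h1 : k - 1 ≤ finrank F (x.1 ⊓ Z : Submodule F V) := hH3 ▸ Submodule.finrank_mono hle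
      have h2 : finrank F (x.1 ⊓ Z : Submodule F V) ≤ k := by
        have := Submodule.finrank_mono (inf_le_left : x.1 ⊓ Z ≤ x.1); rw [x.2] at this; exact this
      have h3 : finrank F (x.1 ⊓ Z : Submodule F V) ≠ k := by
        intro h
        have : (x.1 ⊓ Z : Submodule F V) = Z :=
          Submodule.eq_of_le_of_finrank_le inf_le_right (by rw [hZrk, h])
        exact hZnx (this ▸ inf_le_left)
      omega
    have hadj : (grassmannGraph F V k).Adj x z := by
      refine ⟨fun h => hZnx (congrArg Subtype.val h ▸ le_rfl), hxZ⟩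
    -- finrank (Z ⊓ y) = f + 1
    have hvxy : v ∉ (x.1 ⊓ y.1 : Submodule F V) := fun h => hvx h.1
    have hlow : f + 1 ≤ finrank F (Z ⊓ y.1 : Submodule F V) := by
      have hle : (x.1 ⊓ y.1 : Submodule F V) ⊔ (F ∙ v) ≤ Z ⊓ y.1 :=
        sup_le (le_inf (le_trans hH1 le_sup_left) inf_le_right)
          (le_inf le_sup_right ((Submodule.span_singleton_le_iff_mem v y.1).mpr hvy))
      have := Submodule.finrank_mono hle
      rwa [gg_sup_span _ v hvxy, ← hfdef] at this
    have hhigh : finrank F (Z ⊓ y.1 : Submodule F V) ≤ f + 1 := by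
      have := gg_step (k := k) x.1 Z y.1 hZrk hxZ hk inf_le_left
      omega
    have hZy : finrank F (Z ⊓ y.1 : Submodule F V) = f + 1 := le_antisymm hhigh hlow
    obtain ⟨w, hw⟩ := ih z y (by rw [hZy]; omega)
    exact ⟨SimpleGraph.Walk.cons hadj w, by rw [SimpleGraph.Walk.length_cons, hw]⟩

lemma gg_dist (hk : 1 ≤ k) (x y : Vtx) :
    (grassmannGraph F V k).dist x y = k - finrank F (x.1 ⊓ y.1 : Submodule F V) := by
  set f := finrank F (x.1 ⊓ y.1 : Submodule F V) with hfdef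
  have hfk : f ≤ k := by
    have := Submodule.finrank_mono (inf_le_left : x.1 ⊓ y.1 ≤ x.1)
    rw [x.2] at this; exact this
  obtain ⟨w, hw⟩ := gg_walk_build hk (k - f) x y (by omega)
  have hub : (grassmannGraph F V k).dist x y ≤ k - f := hw ▸ SimpleGraph.dist_le w
  obtain ⟨w', hw'⟩ := SimpleGraph.Reachable.exists_walk_length_eq_dist ⟨w⟩
  have hlb := gg_walk_lower hk w'
  rw [hw'] at hlb
  omega

end Graph

theorem stmt16 {F V : Type*} [Field F] [Fintype F] [AddCommGroup V] [Module F V]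
    [FiniteDimensional F V] {n k : ℕ} (hn : Module.finrank F V = n)
    (hnk : n > 2 * k) (hk : 2 * k ≥ 6)
    (x y z : {W : Submodule F V // Module.finrank F W = k}) (i : ℕ)
    (hi1 : 1 < i) (hik : i < k) (hd : (grassmannGraph F V k).dist x y = i)
    (hadj : (grassmannGraph F V k).Adj x z)
    (hdz : (grassmannGraph F V k).dist z y = i + 1) :
    Module.finrank F (z.1 ⊓ x.1 ⊓ y.1 : Submodule F V) = k - i - 1 ∧
    Module.finrank F (z.1 ⊓ (x.1 ⊔ y.1) : Submodule F V) = k - 1 := by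
  have hk1 : 1 ≤ k := by omega
  -- dimensions of the pairwise intersections
  have hfle : ∀ a b : {W : Submodule F V // finrank F W = k},
      finrank F (a.1 ⊓ b.1 : Submodule F V) ≤ k := by
    intro a b
    have := Submodule.finrank_mono (inf_le_left : a.1 ⊓ b.1 ≤ a.1)
    rw [a.2] at this; exact this
  have hxy : finrank F (x.1 ⊓ y.1 : Submodule F V) = k - i := by
    have := gg_dist hk1 x y; have h2 := hfle x y; omega
  have hzy : finrank F (z.1 ⊓ y.1 : Submodule F V) = k - i - 1 := by
    have := gg_dist hk1 z y; have h2 := hfle z y; omega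
  have hzx : finrank F (z.1 ⊓ x.1 : Submodule F V) = k - 1 := by
    rw [inf_comm]; exact hadj.2
  constructor
  · -- first claim
    have heq : (z.1 ⊓ x.1 ⊓ y.1 : Submodule F V) = (z.1 ⊓ x.1) ⊓ (x.1 ⊓ y.1) := by
      apply le_antisymm
      · exact le_inf inf_le_left (le_inf (le_trans inf_le_left inf_le_right) inf_le_right)
      · exact le_inf inf_le_left (le_trans inf_le_right inf_le_right)
    have hsum := Submodule.finrank_sup_add_finrank_inf_eq (z.1 ⊓ x.1) (x.1 ⊓ y.1)
    have hsup : finrank F ((z.1 ⊓ x.1) ⊔ (x.1 ⊓ y.1) : Submodule F V) ≤ k := by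
      have := Submodule.finrank_mono (sup_le (inf_le_right : z.1 ⊓ x.1 ≤ x.1)
        (inf_le_left : x.1 ⊓ y.1 ≤ x.1))
      rw [x.2] at this; exact this
    have hub : finrank F (z.1 ⊓ x.1 ⊓ y.1 : Submodule F V) ≤ k - i - 1 := by
      have := Submodule.finrank_mono
        (le_inf (le_trans inf_le_left inf_le_left) inf_le_right :
          (z.1 ⊓ x.1 ⊓ y.1 : Submodule F V) ≤ z.1 ⊓ y.1)
      rw [hzy] at this; exact this
    rw [heq]
    rw [heq] at hub
    rw [hzx, hxy] at hsum
    omega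
  · -- second claim
    have hlb : k - 1 ≤ finrank F (z.1 ⊓ (x.1 ⊔ y.1) : Submodule F V) := by
      have := Submodule.finrank_mono
        (le_inf inf_le_left (le_trans inf_le_right le_sup_left) :
          (z.1 ⊓ x.1 : Submodule F V) ≤ z.1 ⊓ (x.1 ⊔ y.1))
      rw [hzx] at this; exact this
    have hub : finrank F (z.1 ⊓ (x.1 ⊔ y.1) : Submodule F V) ≤ k := by
      have := Submodule.finrank_mono (inf_le_left : (z.1 ⊓ (x.1 ⊔ y.1) : Submodule F V) ≤ z.1)
      rw [z.2] at this; exact this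
    have hne : finrank F (z.1 ⊓ (x.1 ⊔ y.1) : Submodule F V) ≠ k := by
      intro h
      have hzle : z.1 ≤ x.1 ⊔ y.1 := by
        have : (z.1 ⊓ (x.1 ⊔ y.1) : Submodule F V) = z.1 :=
          Submodule.eq_of_le_of_finrank_le inf_le_left (by rw [z.2, h])
        exact this ▸ inf_le_right
      have h1 := Submodule.finrank_sup_add_finrank_inf_eq x.1 y.1
      have h2 := Submodule.finrank_sup_add_finrank_inf_eq z.1 y.1
      have h3 : finrank F (z.1 ⊔ y.1 : Submodule F V) ≤
          finrank F (x.1 ⊔ y.1 : Submodule F V) :=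
        Submodule.finrank_mono (sup_le hzle le_sup_right)
      rw [hxy, x.2, y.2] at h1
      rw [hzy, z.2, y.2] at h2
      omega
    omega
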